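/- For the unweighted normalized Laplacian on a locally finite simple graph G and a vertex x, the condition CD(0,∞) at x (i.e., Γ₂(f)(x) ≥ 0 for all finitely supported f) holds if and only if for all f with f(x)=0 one has Σ_{y∼x, z∼y} (d_x/d_y)|2f(y) − f(z)|² + 2(Σ_{y∼x} f(y))² − 2 d_x Σ_{y∼x} f(y)² ≥ 0. -/

import Mathlib

open Finset

variable {V : Type*}

/-- Unweighted non-normalized graph Laplacian. -/
noncomputable def nnLap (G : SimpleGraph V) [G.LocallyFinite] (f : V → ℝ) (x : V) : ℝ :=
  ∑ y ∈ G.neighborFinset x, (f y - f x)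

/-- Unweighted normalized graph Laplacian. -/
noncomputable def nLap (G : SimpleGraph V) [G.LocallyFinite] (f : V → ℝ) (x : V) : ℝ :=
  (∑ y ∈ G.neighborFinset x, (f y - f x)) / (G.degree x : ℝ)

/-- Bakry–Émery carré du champ operator Γ for a Laplacian `L`. -/
noncomputable def gam (L : (V → ℝ) → V → ℝ) (f g : V → ℝ) (x : V) : ℝ :=
  (L (f * g) x - f x * L g x - g x * L f x) / 2

/-- Iterated carré du champ operator Γ₂ for a Laplacian `L`. -/
noncomputable def gam2 (L : (V → ℝ) → V → ℝ) (f g : V → ℝ) (x : V) : ℝ :=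
  (L (gam L f g) x - gam L f (L g) x - gam L (L f) g x) / 2

/-- `G` has no 4-cycle subgraph, equivalently any two distinct vertices have at
most one common neighbor. -/
def C4Free (G : SimpleGraph V) : Prop :=
  ∀ ⦃u v a b : V⦄, u ≠ v → G.Adj u a → G.Adj a v → G.Adj u b → G.Adj b v → a = b

section helpers
variable (G : SimpleGraph V) [G.LocallyFinite]

lemma nLap_lin (u w : V → ℝ) (c : ℝ) (y : V) :
    nLap G (fun v => u v - c * w v) y = nLap G u y - c * nLap G w y := by
  unfold nLap
  have h : ∑ z ∈ G.neighborFinset y, ((fun v => u v - c * w v) z - (fun v => u v - c * w v) y)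
      = ∑ z ∈ G.neighborFinset y, (u z - u y) - c * ∑ z ∈ G.neighborFinset y, (w z - w y) := by
    rw [Finset.mul_sum, ← Finset.sum_sub_distrib]
    exact Finset.sum_congr rfl (fun z _ => by ring)
  rw [h, sub_div, mul_div_assoc]

lemma nLap_sub_const (f : V → ℝ) (c : ℝ) :
    nLap G (fun v => f v - c) = nLap G f := by
  funext y
  unfold nLap
  congr 1
  exact Finset.sum_congr rfl (fun z _ => by ring)

lemma gam_comm (L : (V → ℝ) → V → ℝ) (f g : V → ℝ) (x : V) :
    gam L f g x = gam L g f x := by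
  unfold gam; rw [mul_comm f g]; ring

lemma gam_sub_const (f h : V → ℝ) (c : ℝ) (x : V) :
    gam (nLap G) (fun v => f v - c) h x = gam (nLap G) f h x := by
  unfold gam
  have h1 : (fun v => f v - c) * h = fun v => (f * h) v - c * h v := by
    funext v; simp only [Pi.mul_apply]; ring
  rw [h1, nLap_lin, nLap_sub_const]
  ring

lemma gam2_sub_const (f : V → ℝ) (c : ℝ) (x : V) :
    gam2 (nLap G) (fun v => f v - c) (fun v => f v - c) x = gam2 (nLap G) f f x := by
  have hLg : nLap G (fun v => f v - c) = nLap G f := nLap_sub_const G f c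
  have hΓ : gam (nLap G) (fun v => f v - c) (fun v => f v - c) = gam (nLap G) f f := by
    funext y
    rw [gam_sub_const, gam_comm, gam_sub_const, gam_comm]
  unfold gam2
  rw [hΓ, hLg, gam_sub_const, gam_comm (nLap G) (nLap G f) (fun v => f v - c),
    gam_sub_const, gam_comm]

lemma gam_self_eq (hd : ∀ v : V, 0 < G.degree v) (f : V → ℝ) (y : V) :
    gam (nLap G) f f y = (∑ z ∈ G.neighborFinset y, (f z - f y)^2) / (2 * (G.degree y : ℝ)) := by
  have hdy : (G.degree y : ℝ) ≠ 0 := ne_of_gt (by exact_mod_cast hd y)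
  unfold gam nLap
  have h : ∑ z ∈ G.neighborFinset y, ((f * f) z - (f * f) y)
      - f y * ∑ z ∈ G.neighborFinset y, (f z - f y)
      - f y * ∑ z ∈ G.neighborFinset y, (f z - f y)
      = ∑ z ∈ G.neighborFinset y, (f z - f y)^2 := by
    rw [Finset.mul_sum, ← Finset.sum_sub_distrib, ← Finset.sum_sub_distrib]
    exact Finset.sum_congr rfl (fun z _ => by simp only [Pi.mul_apply]; ring)
  rw [← mul_div_assoc, div_sub_div_same, div_sub_div_same, div_div, h,
    mul_comm ((G.degree y : ℝ)) 2]

lemma master (hd : ∀ v : V, 0 < G.degree v) (x : V) (f : V → ℝ) (hf : f x = 0) :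
    ∑ y ∈ G.neighborFinset x, ∑ z ∈ G.neighborFinset y,
          ((G.degree x : ℝ) / (G.degree y : ℝ)) * (2 * f y - f z) ^ 2
      + 2 * (∑ y ∈ G.neighborFinset x, f y) ^ 2
      - 2 * (G.degree x : ℝ) * ∑ y ∈ G.neighborFinset x, (f y) ^ 2
    = 4 * (G.degree x : ℝ)^2 * gam2 (nLap G) f f x := by
  have hdx : (G.degree x : ℝ) ≠ 0 := ne_of_gt (by exact_mod_cast hd x)
  -- Step 1: inner double sum
  have hy : ∀ y ∈ G.neighborFinset x,
      ∑ z ∈ G.neighborFinset y, ((G.degree x : ℝ) / (G.degree y : ℝ)) * (2 * f y - f z) ^ 2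
      = 2 * (G.degree x : ℝ) * gam (nLap G) f f y
        - 2 * (G.degree x : ℝ) * (f y * nLap G f y)
        + (G.degree x : ℝ) * (f y) ^ 2 := by
    intro y _
    have hdy : (G.degree y : ℝ) ≠ 0 := ne_of_gt (by exact_mod_cast hd y)
    rw [← Finset.mul_sum, gam_self_eq G hd f y]
    have e1 : ∑ z ∈ G.neighborFinset y, (2 * f y - f z) ^ 2
        = ∑ z ∈ G.neighborFinset y, ((f z - f y)^2 - 2 * f y * (f z - f y) + f y ^ 2) :=
      Finset.sum_congr rfl (fun z _ => by ring)
    have e2 : nLap G f y = (∑ z ∈ G.neighborFinset y, (f z - f y)) / (G.degree y : ℝ) := rfl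
    rw [e1, Finset.sum_add_distrib, Finset.sum_sub_distrib, ← Finset.mul_sum,
      Finset.sum_const, SimpleGraph.card_neighborFinset_eq_degree, nsmul_eq_mul, e2]
    field_simp
  rw [Finset.sum_congr rfl hy, Finset.sum_add_distrib, Finset.sum_sub_distrib,
    ← Finset.mul_sum, ← Finset.mul_sum, ← Finset.mul_sum]
  -- Step 2: expand gam2
  have hΓx : gam (nLap G) f f x = (∑ y ∈ G.neighborFinset x, (f y)^2) / (2 * (G.degree x : ℝ)) := by
    rw [gam_self_eq G hd f x]
    congr 1
    exact Finset.sum_congr rfl (fun y _ => by rw [hf]; ring)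
  have hLfx : nLap G f x = (∑ y ∈ G.neighborFinset x, f y) / (G.degree x : ℝ) := by
    unfold nLap
    congr 1
    exact Finset.sum_congr rfl (fun y _ => by rw [hf, sub_zero])
  have hE1 : nLap G (gam (nLap G) f f) x
      = ((∑ y ∈ G.neighborFinset x, gam (nLap G) f f y)
          - (G.degree x : ℝ) * ((∑ y ∈ G.neighborFinset x, (f y)^2) / (2 * (G.degree x : ℝ))))
        / (G.degree x : ℝ) := by
    show (∑ y ∈ G.neighborFinset x, (gam (nLap G) f f y - gam (nLap G) f f x)) / (G.degree x : ℝ) = _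
    rw [Finset.sum_sub_distrib, Finset.sum_const, SimpleGraph.card_neighborFinset_eq_degree, nsmul_eq_mul, hΓx]
  have hE2 : gam (nLap G) f (nLap G f) x
      = ((∑ y ∈ G.neighborFinset x, f y * nLap G f y) / (G.degree x : ℝ)
          - ((∑ y ∈ G.neighborFinset x, f y) / (G.degree x : ℝ))
            * ((∑ y ∈ G.neighborFinset x, f y) / (G.degree x : ℝ))) / 2 := by
    have ha : nLap G (f * nLap G f) x
        = (∑ y ∈ G.neighborFinset x, f y * nLap G f y) / (G.degree x : ℝ) := by
      show (∑ y ∈ G.neighborFinset x, ((f * nLap G f) y - (f * nLap G f) x)) / (G.degree x : ℝ) = _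
      congr 1
      exact Finset.sum_congr rfl (fun y _ => by simp [Pi.mul_apply, hf])
    unfold gam
    rw [ha, hf, zero_mul, hLfx]
    ring
  have hE3 : gam (nLap G) (nLap G f) f x = gam (nLap G) f (nLap G f) x := gam_comm _ _ _ _
  unfold gam2
  rw [hE1, hE3, hE2]
  field_simp
  ring

end helpers

/-- For the unweighted normalized Laplacian, `CD(0,∞)` at `x` holds iff for all
`f` vanishing at `x` the stated quadratic expression is nonnegative. -/
theorem stmt_8 (G : SimpleGraph V) [G.LocallyFinite]
    (hd : ∀ v : V, 0 < G.degree v) (x : V) :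
    (∀ f : V → ℝ, 0 ≤ gam2 (nLap G) f f x) ↔
      (∀ f : V → ℝ, f x = 0 →
        0 ≤ ∑ y ∈ G.neighborFinset x, ∑ z ∈ G.neighborFinset y,
              ((G.degree x : ℝ) / (G.degree y : ℝ)) * (2 * f y - f z) ^ 2
          + 2 * (∑ y ∈ G.neighborFinset x, f y) ^ 2
          - 2 * (G.degree x : ℝ) * ∑ y ∈ G.neighborFinset x, (f y) ^ 2) := by
  have hd2 : (0:ℝ) < 4 * (G.degree x : ℝ)^2 := by
    have : (0:ℝ) < (G.degree x : ℝ) := by exact_mod_cast hd x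
    positivity
  constructor
  · intro h f hf
    rw [master G hd x f hf]
    exact mul_nonneg (le_of_lt hd2) (h f)
  · intro h f
    rw [← gam2_sub_const G f (f x) x]
    have hg : (fun v => f v - f x) x = 0 := sub_self _
    have h0 := h (fun v => f v - f x) hg
    rw [master G hd x _ hg] at h0
    nlinarith [h0, hd2]
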